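/- Let φ(t) = (2π)^{-1/2} e^{-t²/2} denote the standard normal density and Φ(t) = ∫_{-∞}^{t} φ(u) du the standard normal CDF. For μ ∈ ℝ, σ > 0 and x ∈ ℝ, set z = (x − μ)/σ. Then the continuous ranked probability score of the Gaussian predictive distribution N(μ, σ²) at the observation x has the closed form ∫_ℝ (Φ((y − μ)/σ) − 1{y ≥ x})² dy = σ ( z (2Φ(z) − 1) + 2φ(z) − 1/√π ). -/

import Mathlib

open MeasureTheory Real Set Filter Topology

/-- Standard normal density `φ(t) = (2π)^{-1/2} e^{-t²/2}`. -/
noncomputable def stdNormalPDF (t : ℝ) : ℝ :=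
  (Real.sqrt (2 * Real.pi))⁻¹ * Real.exp (-t ^ 2 / 2)

/-- Standard normal CDF `Φ(t) = ∫_{-∞}^t φ(u) du`. -/
noncomputable def stdNormalCDF (t : ℝ) : ℝ :=
  ∫ u in Set.Iic t, stdNormalPDF u

namespace CRPSAux


lemma pdf_eq (t : ℝ) : stdNormalPDF t
    = (Real.sqrt (2 * Real.pi))⁻¹ * Real.exp (-(1/2) * t ^ 2) := by
  unfold stdNormalPDF; ring_nf

lemma pdf_nonneg (t : ℝ) : 0 ≤ stdNormalPDF t := by
  unfold stdNormalPDF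
  positivity

lemma pdf_neg (t : ℝ) : stdNormalPDF (-t) = stdNormalPDF t := by
  unfold stdNormalPDF; ring_nf

lemma continuous_pdf : Continuous stdNormalPDF := by
  unfold stdNormalPDF
  fun_prop

lemma integrable_pdf : Integrable stdNormalPDF := by
  have h : Integrable (fun t : ℝ => Real.exp (-(1/2 : ℝ) * t ^ 2)) :=
    integrable_exp_neg_mul_sq (by norm_num)
  have := h.const_mul ((Real.sqrt (2 * Real.pi))⁻¹)
  exact this.congr (by filter_upwards with t; rw [pdf_eq])

lemma integral_pdf : ∫ t, stdNormalPDF t = 1 := by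
  have h : ∫ t : ℝ, Real.exp (-(1/2 : ℝ) * t ^ 2) = Real.sqrt (Real.pi / (1/2)) :=
    integral_gaussian (1/2)
  have h2 : (Real.pi / (1/2 : ℝ)) = 2 * Real.pi := by ring
  have hpos : (0:ℝ) < Real.sqrt (2 * Real.pi) :=
    Real.sqrt_pos.2 (by positivity)
  calc ∫ t, stdNormalPDF t
      = (Real.sqrt (2 * Real.pi))⁻¹ * ∫ t : ℝ, Real.exp (-(1/2 : ℝ) * t ^ 2) := by
        rw [← integral_const_mul]
        congr 1 with t
        rw [pdf_eq]
    _ = 1 := by rw [h, h2]; field_simp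

lemma hasDerivAt_pdf (t : ℝ) : HasDerivAt stdNormalPDF (-t * stdNormalPDF t) t := by
  have h1 : HasDerivAt (fun u : ℝ => -u ^ 2 / 2) (-t) t := by
    have := ((hasDerivAt_pow 2 t).neg).div_const 2
    simpa using this.congr_deriv (by ring)
  have h2 := (h1.exp).const_mul ((Real.sqrt (2 * Real.pi))⁻¹)
  unfold stdNormalPDF
  refine h2.congr_deriv ?_
  ring



lemma tendsto_pdf_atBot : Tendsto stdNormalPDF atBot (𝓝 0) := by
  have h1 : Tendsto (fun t : ℝ => t ^ 2) atBot atTop := by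
    have h0 : Tendsto (fun x : ℝ => x ^ 2) atTop atTop :=
      tendsto_pow_atTop (by norm_num)
    have h := h0.comp (tendsto_neg_atBot_atTop (G := ℝ))
    refine h.congr fun t => ?_
    simp [Function.comp]
  have h2 : Tendsto (fun t : ℝ => t ^ 2 / 2) atBot atTop :=
    h1.atTop_div_const (by norm_num)
  have h3 : Tendsto (fun t : ℝ => -t ^ 2 / 2) atBot atBot := by
    refine (tendsto_neg_atTop_atBot.comp h2).congr fun t => ?_
    simp [Function.comp, neg_div]
  have h4 : Tendsto (fun t : ℝ => Real.exp (-t ^ 2 / 2)) atBot (𝓝 0) :=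
    Real.tendsto_exp_atBot.comp h3
  have h5 := h4.const_mul ((Real.sqrt (2 * Real.pi))⁻¹)
  rw [mul_zero] at h5
  exact h5

lemma cdf_add_iooi (t : ℝ) : stdNormalCDF t + ∫ u in Ioi t, stdNormalPDF u = 1 := by
  unfold stdNormalCDF
  rw [intervalIntegral.integral_Iic_add_Ioi integrable_pdf.integrableOn integrable_pdf.integrableOn,
    integral_pdf]

lemma cdf_neg_eq (t : ℝ) : stdNormalCDF (-t) = ∫ u in Ioi t, stdNormalPDF u := by
  unfold stdNormalCDF
  rw [← integral_comp_neg_Ioi]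
  congr 1 with u
  rw [pdf_neg]

lemma cdf_add_cdf_neg (t : ℝ) : stdNormalCDF t + stdNormalCDF (-t) = 1 := by
  rw [cdf_neg_eq]; exact cdf_add_iooi t

lemma cdf_nonneg (t : ℝ) : 0 ≤ stdNormalCDF t :=
  integral_nonneg fun u => pdf_nonneg u

lemma cdf_le_one (t : ℝ) : stdNormalCDF t ≤ 1 := by
  have := cdf_add_cdf_neg t
  have h := cdf_nonneg (-t)
  linarith

lemma hasDerivAt_cdf (t : ℝ) : HasDerivAt stdNormalCDF (stdNormalPDF t) t := by
  have key : ∀ s : ℝ, stdNormalCDF s = stdNormalCDF 0 + ∫ u in (0:ℝ)..s, stdNormalPDF u := by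
    intro s
    unfold stdNormalCDF
    rw [← intervalIntegral.integral_Iic_sub_Iic integrable_pdf.integrableOn
      integrable_pdf.integrableOn]
    ring
  have h : HasDerivAt (fun s => stdNormalCDF 0 + ∫ u in (0:ℝ)..s, stdNormalPDF u)
      (stdNormalPDF t) t := by
    refine HasDerivAt.const_add _ ?_
    exact intervalIntegral.integral_hasDerivAt_right
      integrable_pdf.intervalIntegrable
      continuous_pdf.stronglyMeasurable.stronglyMeasurableAtFilter
      continuous_pdf.continuousAt
  exact h.congr_of_eventuallyEq (by filter_upwards with s; rw [key s])

lemma continuous_cdf : Continuous stdNormalCDF := by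
  have : Differentiable ℝ stdNormalCDF := fun t => (hasDerivAt_cdf t).differentiableAt
  exact this.continuous

lemma tendsto_cdf_atTop : Tendsto stdNormalCDF atTop (𝓝 1) := by
  have h := (MeasureTheory.aecover_Iic (tendsto_id (α := ℝ))).integral_tendsto_of_countably_generated integrable_pdf
  rw [integral_pdf] at h
  exact h

lemma tendsto_cdf_atBot : Tendsto stdNormalCDF atBot (𝓝 0) := by
  have h := tendsto_cdf_atTop.comp tendsto_neg_atBot_atTop
  have h2 : Tendsto (fun t : ℝ => 1 - stdNormalCDF (-t)) atBot (𝓝 (1 - 1)) :=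
    tendsto_const_nhds.sub h
  simp only [sub_self] at h2
  refine h2.congr (fun t => ?_)
  have := cdf_add_cdf_neg t
  linarith



lemma integrable_id_mul_pdf : Integrable (fun u : ℝ => u * stdNormalPDF u) := by
  have h : Integrable (fun u : ℝ => u * Real.exp (-(1/2 : ℝ) * u ^ 2)) :=
    integrable_mul_exp_neg_mul_sq (by norm_num)
  have := h.const_mul ((Real.sqrt (2 * Real.pi))⁻¹)
  refine this.congr (by filter_upwards with u; rw [pdf_eq]; ring)

lemma integral_id_mul_pdf (t : ℝ) :
    ∫ u in Iic t, u * stdNormalPDF u = -stdNormalPDF t := by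
  have hderiv : ∀ u ∈ Iic t, HasDerivAt (fun v => -stdNormalPDF v) (u * stdNormalPDF u) u := by
    intro u _
    have := (hasDerivAt_pdf u).neg
    refine this.congr_deriv (by ring)
  have htend : Tendsto (fun v => -stdNormalPDF v) atBot (𝓝 0) := by
    have := tendsto_pdf_atBot.neg
    simpa using this
  have := integral_Iic_of_hasDerivAt_of_tendsto
    (f := fun v => -stdNormalPDF v) (f' := fun u => u * stdNormalPDF u)
    ((continuous_pdf.neg).continuousWithinAt)
    (fun u hu => hderiv u (le_of_lt (mem_Iio.1 hu))) integrable_id_mul_pdf.integrableOn htend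
  rw [this]; ring

lemma cdf_bound {t : ℝ} (ht : t < 0) : stdNormalCDF t ≤ stdNormalPDF t / (-t) := by
  have key : -stdNormalPDF t ≤ t * stdNormalCDF t := by
    rw [← integral_id_mul_pdf t]
    unfold stdNormalCDF
    rw [← integral_const_mul]
    refine setIntegral_mono_on integrable_id_mul_pdf.integrableOn
      (integrable_pdf.integrableOn.const_mul t) measurableSet_Iic ?_
    intro u hu
    exact mul_le_mul_of_nonneg_right (hu : u ≤ t) (pdf_nonneg u)
  rw [le_div_iff₀ (by linarith : (0:ℝ) < -t)]
  nlinarith [key]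

lemma integrableOn_cdf_sq (b : ℝ) :
    IntegrableOn (fun t => stdNormalCDF t ^ 2) (Iic b) := by
  have h1 : IntegrableOn (fun t => stdNormalCDF t ^ 2) (Iic (-1)) := by
    refine Integrable.mono (integrable_pdf.integrableOn)
      ((continuous_cdf.pow 2).aestronglyMeasurable) ?_
    refine (ae_restrict_iff' measurableSet_Iic).2 ?_
    filter_upwards with t ht
    have htm : t ≤ -1 := mem_Iic.1 ht
    have ht1 : t < 0 := lt_of_le_of_lt htm (by norm_num)
    have hb := cdf_bound ht1
    have h2 : stdNormalPDF t / (-t) ≤ stdNormalPDF t := by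
      rw [div_le_iff₀ (by linarith)]
      nlinarith [pdf_nonneg t, (by linarith : (1:ℝ) ≤ -t)]

    have h0 := cdf_nonneg t
    have h1' := cdf_le_one t
    rw [Real.norm_eq_abs, Real.norm_eq_abs, abs_of_nonneg (pdf_nonneg t),
      abs_of_nonneg (by positivity)]
    nlinarith
  have h2 : IntegrableOn (fun t => stdNormalCDF t ^ 2) (Icc (-1) b) :=
    (continuous_cdf.pow 2).continuousOn.integrableOn_Icc
  have h3 : Iic b ⊆ Iic (-1) ∪ Icc (-1) b := by
    intro t ht
    rcases le_or_gt t (-1) with h | h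
    · exact Or.inl h
    · exact Or.inr ⟨le_of_lt h, ht⟩
  exact (h1.union h2).mono_set h3

lemma tendsto_mul_cdf_sq_atBot :
    Tendsto (fun t : ℝ => t * stdNormalCDF t ^ 2) atBot (𝓝 0) := by
  have hg : Tendsto (fun t : ℝ => stdNormalPDF t ^ 2) atBot (𝓝 0) := by
    have := tendsto_pdf_atBot.mul tendsto_pdf_atBot
    simpa [pow_two] using this
  refine squeeze_zero_norm' ?_ hg
  filter_upwards [eventually_le_atBot (-1 : ℝ)] with t ht
  have ht0 : t < 0 := lt_of_le_of_lt ht (by norm_num)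
  have hb := cdf_bound ht0
  have h0 := cdf_nonneg t
  have hp := pdf_nonneg t
  rw [Real.norm_eq_abs, abs_mul, abs_of_nonpos (le_of_lt ht0), abs_of_nonneg (by positivity)]
  have hcb : stdNormalCDF t ^ 2 ≤ (stdNormalPDF t / (-t)) ^ 2 := by
    exact pow_le_pow_left₀ h0 hb 2
  have hmt : (1:ℝ) ≤ -t := by linarith
  calc -t * stdNormalCDF t ^ 2 ≤ -t * (stdNormalPDF t / (-t)) ^ 2 := by
        exact mul_le_mul_of_nonneg_left hcb (by linarith)
    _ = stdNormalPDF t ^ 2 / (-t) := by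
        have htne : t ≠ 0 := ne_of_lt ht0
        field_simp
    _ ≤ stdNormalPDF t ^ 2 := by
        rw [div_le_iff₀ (by linarith)]
        nlinarith


/-- key gaussian product identity -/
lemma pdf_sq (t : ℝ) :
    2 * stdNormalPDF t ^ 2
      = (Real.sqrt Real.pi)⁻¹ * (Real.sqrt 2 * stdNormalPDF (Real.sqrt 2 * t)) := by
  unfold stdNormalPDF
  have h2 : Real.sqrt (2 * Real.pi) = Real.sqrt 2 * Real.sqrt Real.pi :=
    Real.sqrt_mul (by norm_num) _
  have hs2 : Real.sqrt 2 ^ 2 = 2 := Real.sq_sqrt (by norm_num)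
  have hexp : Real.exp (-t ^ 2 / 2) ^ 2 = Real.exp (-(Real.sqrt 2 * t) ^ 2 / 2) := by
    rw [← Real.exp_nat_mul]
    congr 1
    rw [mul_pow, hs2]
    ring
  have hs2pos : (0:ℝ) < Real.sqrt 2 := Real.sqrt_pos.2 (by norm_num)
  have hsppos : (0:ℝ) < Real.sqrt Real.pi := Real.sqrt_pos.2 Real.pi_pos
  rw [mul_pow, hexp, h2]
  rw [mul_inv]
  field_simp
  ring_nf
  exact hs2.symm

noncomputable def antider (t : ℝ) : ℝ :=
  t * stdNormalCDF t ^ 2 + 2 * stdNormalPDF t * stdNormalCDF t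
    - (Real.sqrt Real.pi)⁻¹ * stdNormalCDF (Real.sqrt 2 * t)

lemma hasDerivAt_antider (t : ℝ) : HasDerivAt antider (stdNormalCDF t ^ 2) t := by
  have hΦ := hasDerivAt_cdf t
  have hφ := hasDerivAt_pdf t
  have h1 : HasDerivAt (fun t => t * stdNormalCDF t ^ 2)
      (stdNormalCDF t ^ 2 + t * (2 * stdNormalCDF t * stdNormalPDF t)) t := by
    have h := (hasDerivAt_id t).mul (hΦ.pow 2)
    simp only [id_eq] at h
    exact h.congr_deriv (by simp only [Pi.pow_apply]; ring)
  have h2 : HasDerivAt (fun t => 2 * stdNormalPDF t * stdNormalCDF t)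
      (2 * (-t * stdNormalPDF t) * stdNormalCDF t + 2 * stdNormalPDF t * stdNormalPDF t) t := by
    have := ((hφ.const_mul 2).mul hΦ)
    exact this.congr_deriv (by ring)
  have h3 : HasDerivAt (fun t => (Real.sqrt Real.pi)⁻¹ * stdNormalCDF (Real.sqrt 2 * t))
      ((Real.sqrt Real.pi)⁻¹ * (Real.sqrt 2 * stdNormalPDF (Real.sqrt 2 * t))) t := by
    have hc : HasDerivAt (fun t : ℝ => Real.sqrt 2 * t) (Real.sqrt 2) t := by
      simpa using (hasDerivAt_id t).const_mul (Real.sqrt 2)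
    have := ((hasDerivAt_cdf (Real.sqrt 2 * t)).comp t hc).const_mul ((Real.sqrt Real.pi)⁻¹)
    exact this.congr_deriv (by ring)
  have h := (h1.add h2).sub h3
  refine h.congr_deriv ?_
  have key := pdf_sq t
  nlinarith [key]

lemma tendsto_antider_atBot : Tendsto antider atBot (𝓝 0) := by
  have h1 := tendsto_mul_cdf_sq_atBot
  have h2 : Tendsto (fun t : ℝ => 2 * stdNormalPDF t * stdNormalCDF t) atBot (𝓝 0) := by
    have := (tendsto_pdf_atBot.const_mul 2).mul tendsto_cdf_atBot
    simpa using this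
  have h3 : Tendsto (fun t : ℝ => (Real.sqrt Real.pi)⁻¹ * stdNormalCDF (Real.sqrt 2 * t))
      atBot (𝓝 0) := by
    have hc : Tendsto (fun t : ℝ => Real.sqrt 2 * t) atBot atBot := by
      refine Tendsto.const_mul_atBot (Real.sqrt_pos.2 (by norm_num)) tendsto_id
    have := (tendsto_cdf_atBot.comp hc).const_mul ((Real.sqrt Real.pi)⁻¹)
    simpa [Function.comp] using this
  have := (h1.add h2).sub h3
  unfold antider
  simpa using this

lemma integral_cdf_sq (b : ℝ) :
    ∫ t in Iic b, stdNormalCDF t ^ 2 = antider b := by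
  have := integral_Iic_of_hasDerivAt_of_tendsto
    (f := antider) (f' := fun t => stdNormalCDF t ^ 2)
    (hasDerivAt_antider b).continuousAt.continuousWithinAt
    (fun u _ => hasDerivAt_antider u) (integrableOn_cdf_sq b) tendsto_antider_atBot
  rw [this, sub_zero]



lemma one_sub_cdf_sq (t : ℝ) : (stdNormalCDF t - 1) ^ 2 = stdNormalCDF (-t) ^ 2 := by
  have hb : stdNormalCDF (-t) = 1 - stdNormalCDF t := by
    have := cdf_add_cdf_neg t; linarith
  rw [hb]; ring

lemma integrableOn_sub_one_sq (z : ℝ) :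
    IntegrableOn (fun t => (stdNormalCDF t - 1) ^ 2) (Ici z) := by
  have h : Integrable ((Iic (-z)).indicator (fun t => stdNormalCDF t ^ 2)) :=
    (integrable_indicator_iff measurableSet_Iic).2 (integrableOn_cdf_sq (-z))
  have h2 := h.comp_neg
  have heq : (fun t : ℝ => (Iic (-z)).indicator (fun t => stdNormalCDF t ^ 2) (-t))
      = (Ici z).indicator (fun t => (stdNormalCDF t - 1) ^ 2) := by
    funext t
    by_cases ht : z ≤ t
    · rw [indicator_of_mem (by simpa using ht : -t ∈ Iic (-z)),
        indicator_of_mem (by simpa using ht : t ∈ Ici z), one_sub_cdf_sq]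
    · rw [indicator_of_notMem (by simpa using ht),
        indicator_of_notMem (by simpa using ht)]
  rw [heq] at h2
  exact (integrable_indicator_iff measurableSet_Ici).1 h2

lemma main (z : ℝ) :
    ∫ t : ℝ, (stdNormalCDF t - if z ≤ t then (1:ℝ) else 0) ^ 2
      = z * (2 * stdNormalCDF z - 1) + 2 * stdNormalPDF z - 1 / Real.sqrt Real.pi := by
  have hfun : (fun t : ℝ => (stdNormalCDF t - if z ≤ t then (1:ℝ) else 0) ^ 2)
      = fun t => (Iio z).indicator (fun t => stdNormalCDF t ^ 2) t
        + (Ici z).indicator (fun t => (stdNormalCDF t - 1) ^ 2) t := by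
    funext t
    by_cases h : z ≤ t
    · rw [if_pos h, indicator_of_notMem (by simpa using h),
        indicator_of_mem (by simpa using h : t ∈ Ici z)]
      ring
    · rw [if_neg h, indicator_of_mem (by simpa using h : t ∈ Iio z),
        indicator_of_notMem (by simpa using h)]
      ring
  rw [hfun, integral_add
    ((integrable_indicator_iff measurableSet_Iio).2
      ((integrableOn_cdf_sq z).mono_set Iio_subset_Iic_self))
    ((integrable_indicator_iff measurableSet_Ici).2 (integrableOn_sub_one_sq z)),
    integral_indicator measurableSet_Iio, integral_indicator measurableSet_Ici]
  have e1 : ∫ t in Iio z, stdNormalCDF t ^ 2 = antider z := by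
    rw [← integral_Iic_eq_integral_Iio, integral_cdf_sq]
  have e2 : ∫ t in Ici z, (stdNormalCDF t - 1) ^ 2 = antider (-z) := by
    rw [integral_Ici_eq_integral_Ioi]
    have : ∫ t in Ioi z, (stdNormalCDF t - 1) ^ 2
        = ∫ t in Ioi z, stdNormalCDF (-t) ^ 2 := by
      refine setIntegral_congr_fun measurableSet_Ioi fun t _ => ?_
      exact one_sub_cdf_sq t
    rw [this, show (∫ t in Ioi z, stdNormalCDF (-t) ^ 2)
        = ∫ t in Iic (-z), stdNormalCDF t ^ 2 from
      integral_comp_neg_Ioi z (fun t => stdNormalCDF t ^ 2), integral_cdf_sq]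
  rw [e1, e2]
  unfold antider
  have c1 : stdNormalCDF (-z) = 1 - stdNormalCDF z := by
    have := cdf_add_cdf_neg z; linarith
  have c2 : stdNormalCDF (Real.sqrt 2 * -z) = 1 - stdNormalCDF (Real.sqrt 2 * z) := by
    have := cdf_add_cdf_neg (Real.sqrt 2 * z)
    rw [show Real.sqrt 2 * -z = -(Real.sqrt 2 * z) by ring]
    linarith
  rw [c1, c2, pdf_neg, one_div]
  ring


end CRPSAux

/-- Closed form of the continuous ranked probability score of the Gaussian predictive
distribution `N(μ, σ²)` at the observation `x`: with `z = (x − μ)/σ`,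
`∫ (Φ((y − μ)/σ) − 1{y ≥ x})² dy = σ (z (2Φ(z) − 1) + 2φ(z) − 1/√π)`. -/
theorem crps_gaussian_closed_form (μ σ x : ℝ) (hσ : 0 < σ) :
    ∫ y : ℝ, (stdNormalCDF ((y - μ) / σ) - (if x ≤ y then (1 : ℝ) else 0)) ^ 2
      = σ * (((x - μ) / σ) * (2 * stdNormalCDF ((x - μ) / σ) - 1)
            + 2 * stdNormalPDF ((x - μ) / σ) - 1 / Real.sqrt Real.pi) := by
  set z := (x - μ) / σ with hz
  set g : ℝ → ℝ := fun t => (stdNormalCDF t - if z ≤ t then (1:ℝ) else 0) ^ 2 with hg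
  have hstep : ∀ y : ℝ, (stdNormalCDF ((y - μ) / σ) - (if x ≤ y then (1 : ℝ) else 0)) ^ 2
      = g ((y - μ) / σ) := by
    intro y
    have : (x ≤ y) ↔ (z ≤ (y - μ) / σ) := by
      rw [hz, div_le_div_iff_of_pos_right hσ]
      exact (sub_le_sub_iff_right μ).symm
    simp only [hg]
    rw [if_congr this rfl rfl]
  calc ∫ y : ℝ, (stdNormalCDF ((y - μ) / σ) - (if x ≤ y then (1 : ℝ) else 0)) ^ 2
      = ∫ y : ℝ, g ((y - μ) / σ) := by
        congr 1; funext y; exact hstep y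
    _ = ∫ y : ℝ, (fun u => g (u / σ)) (y + -μ) := by
        simp only [sub_eq_add_neg]
    _ = ∫ y : ℝ, g (y / σ) := by
        exact integral_add_right_eq_self (μ := volume) (fun u => g (u / σ)) (-μ)
    _ = |σ| • ∫ t, g t := Measure.integral_comp_div g σ
    _ = σ * (z * (2 * stdNormalCDF z - 1) + 2 * stdNormalPDF z - 1 / Real.sqrt Real.pi) := by
        rw [abs_of_pos hσ, smul_eq_mul, CRPSAux.main z]
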